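/- Let $U_q$ be the set of $q$-element subsets of $[n]$ and let $a_Z \geq 0$ for each $Z \in U_q$. For each integer $\ell$ with $0 \leq \ell \leq q$, define $\mu_\ell = \max_{Y \in U_\ell} \sum_{Z \in U_q, Z \supseteq Y} a_Z$. Then for any integer $w \geq 0$ and real $p \geq 0$, $\sum_{Z_1, \dots, Z_w \in U_q} a_{Z_1} \cdots a_{Z_w} \, p^{|Z_1 \cup \cdots \cup Z_w|} \leq \left( \sum_{k=0}^q \binom{wq}{k} \mu_k p^{q-k} \right)^w$. -/

import Mathlib

open Finset

/-- The maximum, over `ℓ`-element subsets `Y` of `[n]`, of the sum of `a Z` over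
`q`-element subsets `Z ⊇ Y` (taken as `0` if there are no `ℓ`-element subsets). -/
noncomputable def polyMu (n q : ℕ) (a : Finset (Fin n) → ℝ) (ℓ : ℕ) : ℝ :=
  WithBot.unbotD 0 ((Finset.powersetCard ℓ (Finset.univ : Finset (Fin n))).image fun Y =>
    ∑ Z ∈ (Finset.powersetCard q (Finset.univ : Finset (Fin n))).filter
      (fun Z => Y ⊆ Z), a Z).max

lemma polyMu_nonneg (n q : ℕ) (a : Finset (Fin n) → ℝ) (ha : ∀ Z, 0 ≤ a Z) (ℓ : ℕ) :
    0 ≤ polyMu n q a ℓ := by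
  unfold polyMu
  set s := (Finset.powersetCard ℓ (Finset.univ : Finset (Fin n))).image fun Y =>
    ∑ Z ∈ (Finset.powersetCard q (Finset.univ : Finset (Fin n))).filter
      (fun Z => Y ⊆ Z), a Z with hs
  rcases s.eq_empty_or_nonempty with h | h
  · simp [h]
  · obtain ⟨m, hm⟩ := s.max_of_nonempty h
    rw [hm]
    simp only [WithBot.unbotD_coe]
    have := Finset.mem_of_max hm
    rw [hs, Finset.mem_image] at this
    obtain ⟨Y, _, hY⟩ := this
    subst hY
    exact Finset.sum_nonneg fun Z _ => ha Z

lemma le_polyMu (n q : ℕ) (a : Finset (Fin n) → ℝ) (ℓ : ℕ) (Y : Finset (Fin n))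
    (hY : Y ∈ Finset.powersetCard ℓ (Finset.univ : Finset (Fin n))) :
    ∑ Z ∈ (Finset.powersetCard q (Finset.univ : Finset (Fin n))).filter
      (fun Z => Y ⊆ Z), a Z ≤ polyMu n q a ℓ := by
  unfold polyMu
  set v := ∑ Z ∈ (Finset.powersetCard q (Finset.univ : Finset (Fin n))).filter
      (fun Z => Y ⊆ Z), a Z with hv
  have hmem : v ∈ (Finset.powersetCard ℓ (Finset.univ : Finset (Fin n))).image fun Y =>
    ∑ Z ∈ (Finset.powersetCard q (Finset.univ : Finset (Fin n))).filter
      (fun Z => Y ⊆ Z), a Z := Finset.mem_image_of_mem _ hY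
  have hle := Finset.le_max hmem
  obtain ⟨m, hm⟩ := Finset.max_of_mem hmem
  rw [hm] at hle ⊢
  simpa using hle

/-- Key step: bound on one extra factor. -/
lemma key_step (n q m : ℕ) (a : Finset (Fin n) → ℝ) (ha : ∀ Z, 0 ≤ a Z)
    (p : ℝ) (hp : 0 ≤ p) (U : Finset (Fin n)) (hU : U.card ≤ m) :
    ∑ Z ∈ Finset.powersetCard q (Finset.univ : Finset (Fin n)), a Z * p ^ (Z \ U).card ≤
    ∑ k ∈ Finset.range (q + 1), (m.choose k : ℝ) * polyMu n q a k * p ^ (q - k) := by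
  classical
  have hmaps : ∀ Z ∈ Finset.powersetCard q (Finset.univ : Finset (Fin n)),
      (Z ∩ U).card ∈ Finset.range (q + 1) := by
    intro Z hZ
    rw [Finset.mem_powersetCard] at hZ
    rw [Finset.mem_range, Nat.lt_succ_iff, ← hZ.2]
    exact Finset.card_le_card (Finset.inter_subset_left)
  rw [← Finset.sum_fiberwise_of_maps_to hmaps]
  apply Finset.sum_le_sum
  intro k hk
  -- within fiber: (Z \ U).card = q - k
  have hfib : ∀ Z ∈ (Finset.powersetCard q (Finset.univ : Finset (Fin n))).filter
      (fun Z => (Z ∩ U).card = k), a Z * p ^ (Z \ U).card = a Z * p ^ (q - k) := by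
    intro Z hZ
    rw [Finset.mem_filter, Finset.mem_powersetCard] at hZ
    have h2 := Finset.card_sdiff_add_card_inter Z U
    have : (Z \ U).card = q - k := by omega
    rw [this]
  rw [Finset.sum_congr rfl hfib, ← Finset.sum_mul]
  have h1 : ∑ Z ∈ (Finset.powersetCard q (Finset.univ : Finset (Fin n))).filter
      (fun Z => (Z ∩ U).card = k), a Z ≤ (m.choose k : ℝ) * polyMu n q a k := by
    -- fiberwise over Y = Z ∩ U in powersetCard k U
    have hmaps2 : ∀ Z ∈ (Finset.powersetCard q (Finset.univ : Finset (Fin n))).filter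
        (fun Z => (Z ∩ U).card = k), Z ∩ U ∈ Finset.powersetCard k U := by
      intro Z hZ
      rw [Finset.mem_filter] at hZ
      rw [Finset.mem_powersetCard]
      exact ⟨Finset.inter_subset_right, hZ.2⟩
    rw [← Finset.sum_fiberwise_of_maps_to hmaps2]
    calc ∑ Y ∈ Finset.powersetCard k U,
          ∑ Z ∈ ((Finset.powersetCard q (Finset.univ : Finset (Fin n))).filter
            (fun Z => (Z ∩ U).card = k)).filter (fun Z => Z ∩ U = Y), a Z
        ≤ ∑ Y ∈ Finset.powersetCard k U, polyMu n q a k := by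
          apply Finset.sum_le_sum
          intro Y hY
          have hYk : Y ∈ Finset.powersetCard k (Finset.univ : Finset (Fin n)) := by
            rw [Finset.mem_powersetCard] at hY ⊢
            exact ⟨Finset.subset_univ Y, hY.2⟩
          refine le_trans ?_ (le_polyMu n q a k Y hYk)
          apply Finset.sum_le_sum_of_subset_of_nonneg
          · intro Z hZ
            simp only [Finset.mem_filter] at hZ ⊢
            exact ⟨hZ.1.1, hZ.2 ▸ Finset.inter_subset_left⟩
          · intro Z _ _; exact ha Z
      _ = ((Finset.powersetCard k U).card : ℝ) * polyMu n q a k := by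
          rw [Finset.sum_const, nsmul_eq_mul]
      _ ≤ (m.choose k : ℝ) * polyMu n q a k := by
          apply mul_le_mul_of_nonneg_right _ (polyMu_nonneg n q a ha k)
          rw [Finset.card_powersetCard]
          exact_mod_cast Nat.choose_le_choose k hU
  have hpk : (0:ℝ) ≤ p ^ (q - k) := pow_nonneg hp _
  calc (∑ Z ∈ (Finset.powersetCard q (Finset.univ : Finset (Fin n))).filter
        (fun Z => (Z ∩ U).card = k), a Z) * p ^ (q - k)
      ≤ ((m.choose k : ℝ) * polyMu n q a k) * p ^ (q - k) :=
        mul_le_mul_of_nonneg_right h1 hpk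
    _ = (m.choose k : ℝ) * polyMu n q a k * p ^ (q - k) := by ring


lemma sum_piFinset_cons {β M : Type*} [DecidableEq β] [AddCommMonoid M] (j : ℕ)
    (S : Finset β) (F : (Fin (j + 1) → β) → M) :
    ∑ Z ∈ Fintype.piFinset (fun _ : Fin (j + 1) => S), F Z =
    ∑ z ∈ S, ∑ Z ∈ Fintype.piFinset (fun _ : Fin j => S), F (Fin.cons z Z) := by
  rw [← Finset.sum_product']
  apply Finset.sum_nbij' (fun f => (f 0, fun i => f i.succ)) (fun zZ => Fin.cons zZ.1 zZ.2)
  · intro f hf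
    simp only [Fintype.mem_piFinset] at hf
    simp [Finset.mem_product, Fintype.mem_piFinset, hf]
  · intro zZ hzZ
    simp only [Finset.mem_product, Fintype.mem_piFinset] at hzZ
    simp only [Fintype.mem_piFinset]
    intro i
    refine Fin.cases ?_ ?_ i
    · simpa using hzZ.1
    · intro i; simpa using hzZ.2 i
  · intro f _; exact Fin.cons_self_tail f
  · intro zZ _; simp
  · intro f _; exact congrArg F (Fin.cons_self_tail f).symm

set_option maxHeartbeats 800000 in
lemma main_aux' (n q w : ℕ) (a : Finset (Fin n) → ℝ) (ha : ∀ Z, 0 ≤ a Z)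
    (p : ℝ) (hp : 0 ≤ p) :
    ∀ j, j ≤ w →
    ∑ Z ∈ Fintype.piFinset
        (fun _ : Fin j => Finset.powersetCard q (Finset.univ : Finset (Fin n))),
      (∏ i, a (Z i)) * p ^ (Finset.univ.biUnion fun i => Z i).card ≤
    (∑ k ∈ Finset.range (q + 1),
      ((w * q).choose k : ℝ) * polyMu n q a k * p ^ (q - k)) ^ j := by
  set B := ∑ k ∈ Finset.range (q + 1),
      ((w * q).choose k : ℝ) * polyMu n q a k * p ^ (q - k) with hB
  have hB0 : 0 ≤ B := by
    apply Finset.sum_nonneg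
    intro k _
    have := polyMu_nonneg n q a ha k
    positivity
  intro j
  induction j with
  | zero =>
    intro _
    simp
  | succ j ih =>
    intro hj
    have hj' : j ≤ w := Nat.le_of_succ_le hj
    rw [sum_piFinset_cons j (Finset.powersetCard q (Finset.univ : Finset (Fin n)))
      (fun Z => (∏ i, a (Z i)) * p ^ (Finset.univ.biUnion fun i => Z i).card)]
    rw [Finset.sum_comm]
    have hterm : ∀ Z ∈ Fintype.piFinset
        (fun _ : Fin j => Finset.powersetCard q (Finset.univ : Finset (Fin n))),
        ∑ z ∈ Finset.powersetCard q (Finset.univ : Finset (Fin n)),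
          (∏ i, a ((Fin.cons z Z : Fin (j+1) → Finset (Fin n)) i)) *
            p ^ (Finset.univ.biUnion fun i => (Fin.cons z Z : Fin (j+1) → Finset (Fin n)) i).card
        ≤ ((∏ i, a (Z i)) * p ^ (Finset.univ.biUnion fun i => Z i).card) * B := by
      intro Z hZ
      set U := Finset.univ.biUnion fun i => Z i with hU
      have hcardU : U.card ≤ w * q := by
        calc U.card ≤ ∑ i : Fin j, (Z i).card := Finset.card_biUnion_le
          _ = ∑ i : Fin j, q := by
              apply Finset.sum_congr rfl
              intro i _
              have := Fintype.mem_piFinset.1 hZ i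
              exact (Finset.mem_powersetCard.1 this).2
          _ = j * q := by simp [Finset.sum_const, mul_comm]
          _ ≤ w * q := Nat.mul_le_mul_right q hj'
      have heq : ∀ z ∈ Finset.powersetCard q (Finset.univ : Finset (Fin n)),
          (∏ i, a ((Fin.cons z Z : Fin (j+1) → Finset (Fin n)) i)) *
            p ^ (Finset.univ.biUnion fun i => (Fin.cons z Z : Fin (j+1) → Finset (Fin n)) i).card
          = ((∏ i, a (Z i)) * p ^ U.card) * (a z * p ^ (z \ U).card) := by
        intro z hz
        have hprod : (∏ i, a ((Fin.cons z Z : Fin (j+1) → Finset (Fin n)) i)) = a z * ∏ i, a (Z i) := by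
          rw [Fin.prod_univ_succ]
          simp
        have hbU : (Finset.univ.biUnion fun i => (Fin.cons z Z : Fin (j+1) → Finset (Fin n)) i) = z ∪ U := by
          ext x
          simp only [Finset.mem_biUnion, Finset.mem_univ, true_and, Finset.mem_union, hU]
          constructor
          · rintro ⟨i, hi⟩
            rcases Fin.eq_zero_or_eq_succ i with h0 | ⟨i', rfl⟩
            · left; rwa [h0, Fin.cons_zero] at hi
            · right; exact ⟨i', by rwa [Fin.cons_succ] at hi⟩
          · rintro (h | ⟨i, hi⟩)
            · exact ⟨0, by rwa [Fin.cons_zero]⟩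
            · exact ⟨i.succ, by rwa [Fin.cons_succ]⟩
        have hcard : (z ∪ U).card = (z \ U).card + U.card := by
          rw [← Finset.card_sdiff_add_card]
        rw [hprod, hbU, hcard, pow_add]
        ring
      rw [Finset.sum_congr rfl heq, ← Finset.mul_sum]
      have hkey := key_step n q (w * q) a ha p hp U hcardU
      have hnn : 0 ≤ (∏ i, a (Z i)) * p ^ U.card := by
        apply mul_nonneg (Finset.prod_nonneg fun i _ => ha _) (pow_nonneg hp _)
      exact mul_le_mul_of_nonneg_left hkey hnn
    calc ∑ Z ∈ Fintype.piFinset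
          (fun _ : Fin j => Finset.powersetCard q (Finset.univ : Finset (Fin n))),
          ∑ z ∈ Finset.powersetCard q (Finset.univ : Finset (Fin n)),
            (∏ i, a ((Fin.cons z Z : Fin (j+1) → Finset (Fin n)) i)) *
              p ^ (Finset.univ.biUnion fun i => (Fin.cons z Z : Fin (j+1) → Finset (Fin n)) i).card
        ≤ ∑ Z ∈ Fintype.piFinset
          (fun _ : Fin j => Finset.powersetCard q (Finset.univ : Finset (Fin n))),
          ((∏ i, a (Z i)) * p ^ (Finset.univ.biUnion fun i => Z i).card) * B :=
          Finset.sum_le_sum hterm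
      _ = (∑ Z ∈ Fintype.piFinset
          (fun _ : Fin j => Finset.powersetCard q (Finset.univ : Finset (Fin n))),
          (∏ i, a (Z i)) * p ^ (Finset.univ.biUnion fun i => Z i).card) * B := by
          rw [Finset.sum_mul]
      _ ≤ B ^ j * B := mul_le_mul_of_nonneg_right (ih hj') hB0
      _ = B ^ (j + 1) := by rw [pow_succ]

/-- Proposition 4.1 (Fapp-prop1). -/
theorem stmt0 (n q : ℕ) (a : Finset (Fin n) → ℝ)
    (ha : ∀ Z, 0 ≤ a Z) (w : ℕ) (p : ℝ) (hp : 0 ≤ p) :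
    ∑ Z ∈ Fintype.piFinset
        (fun _ : Fin w => Finset.powersetCard q (Finset.univ : Finset (Fin n))),
      (∏ i, a (Z i)) * p ^ (Finset.univ.biUnion fun i => Z i).card ≤
    (∑ k ∈ Finset.range (q + 1),
      ((w * q).choose k : ℝ) * polyMu n q a k * p ^ (q - k)) ^ w :=
  main_aux' n q w a ha p hp w le_rfl
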